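/- Let (x_k)_{k≥0} be a sequence of nonnegative real numbers, α ∈ (0, 1], and A, B ≥ 0. Suppose that for every k ≥ 0, x_{k+1}² ≤ ((1 - α)x_k + B)² + A. Then for every k ≥ 0, x_k ≤ (1 - α)^k x₀ + B/α + A/(B + √(α(2 - α)A)), and consequently x_k ≤ (1 - α)^k x₀ + B/α + √(A/α). -/

import Mathlib

/-- the recursion lemma (Lemma 7 of Dalalyan–Karagulyan 2019):
if `x_{k+1}² ≤ ((1-α)x_k + B)² + A` for all `k`, then
`x_k ≤ (1-α)^k x₀ + B/α + A/(B + √(α(2-α)A))` and consequently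
`x_k ≤ (1-α)^k x₀ + B/α + √(A/α)`. -/
theorem dalalyan_recursion_lemma
    (x : ℕ → ℝ) (hx : ∀ k, 0 ≤ x k)
    (α : ℝ) (hα : α ∈ Set.Ioc (0 : ℝ) 1)
    (A B : ℝ) (hA : 0 ≤ A) (hB : 0 ≤ B)
    (hrec : ∀ k, (x (k + 1)) ^ 2 ≤ ((1 - α) * x k + B) ^ 2 + A) :
    ∀ k,
      x k ≤ (1 - α) ^ k * x 0 + B / α + A / (B + Real.sqrt (α * (2 - α) * A)) ∧
      x k ≤ (1 - α) ^ k * x 0 + B / α + Real.sqrt (A / α) := by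
  obtain ⟨hα0, hα1⟩ := hα
  set s : ℝ := Real.sqrt (α * (2 - α) * A) with hs_def
  have hαA : 0 ≤ α * (2 - α) * A := by
    apply mul_nonneg (mul_nonneg hα0.le (by linarith)) hA
  have hs0 : 0 ≤ s := Real.sqrt_nonneg _
  have hs2 : s ^ 2 = α * (2 - α) * A := Real.sq_sqrt hαA
  set D : ℝ := A / (B + s) with hD_def
  have hD0 : 0 ≤ D := div_nonneg hA (by linarith)
  set c : ℝ := B / α with hc_def
  have hc : B = α * c := by rw [hc_def]; field_simp [hα0.ne']
  have hc0 : 0 ≤ c := div_nonneg hB hα0.le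
  -- the key inequality
  have key : A ≤ 2 * B * D + α * (2 - α) * D ^ 2 := by
    rcases eq_or_lt_of_le (by linarith : (0:ℝ) ≤ B + s) with h | h
    · -- B + s = 0, hence B = 0 and A = 0
      have hB0 : B = 0 := by nlinarith
      have hs0' : s = 0 := by linarith
      have heq : α * (2 - α) * A = 0 := by rw [← hs2, hs0']; ring
      have hpos : 0 < α * (2 - α) := mul_pos hα0 (by linarith)
      have hA0 : A = 0 := by
        rcases mul_eq_zero.mp heq with h' | h'
        · exact absurd h' (ne_of_gt hpos)
        · exact h'
      have : 0 ≤ α * (2 - α) * D ^ 2 :=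
        mul_nonneg hpos.le (sq_nonneg _)
      rw [hA0, hB0]; linarith
    · have hDA : D * (B + s) = A := div_mul_cancel₀ A (ne_of_gt h)
      have hdb : 0 ≤ D * B ^ 2 := mul_nonneg hD0 (sq_nonneg _)
      have e1 : α * (2 - α) * D ^ 2 * (B + s) = s ^ 2 * D := by
        rw [hs2, ← hDA]; ring
      have e2 : A * (B + s) = D * (B + s) ^ 2 := by rw [← hDA]; ring
      have e3 : A * (B + s) ≤ (2 * B * D + α * (2 - α) * D ^ 2) * (B + s) := by
        nlinarith [e1, e2, hdb]
      exact le_of_mul_le_mul_right (by linarith) h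
  -- the first bound, by induction
  have main : ∀ k, x k ≤ (1 - α) ^ k * x 0 + c + D := by
    intro k
    induction k with
    | zero => simp; linarith [hx 0]
    | succ k IH =>
      set p : ℝ := (1 - α) ^ k * x 0 with hp_def
      have hp0 : 0 ≤ p := mul_nonneg (pow_nonneg (by linarith) _) (hx 0)
      set T : ℝ := (1 - α) ^ (k + 1) * x 0 + c + D with hT_def
      have hpT : T = (1 - α) * p + c + D := by
        rw [hT_def, hp_def]; ring
      have hT0 : 0 ≤ T := by
        have : 0 ≤ (1 - α) * p := mul_nonneg (by linarith) hp0
        rw [hpT]; linarith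
      have h1 : (1 - α) * x k + B ≤ T - α * D := by
        have := mul_le_mul_of_nonneg_left IH (by linarith : (0:ℝ) ≤ 1 - α)
        rw [hpT, hc]; nlinarith
      have h0 : 0 ≤ (1 - α) * x k + B :=
        add_nonneg (mul_nonneg (by linarith) (hx k)) hB
      have h2 : ((1 - α) * x k + B) ^ 2 ≤ (T - α * D) ^ 2 :=
        pow_le_pow_left₀ h0 h1 2
      have hTcd : 0 ≤ T - (c + D) := by rw [hpT]; nlinarith
      have h3 : (T - α * D) ^ 2 + A ≤ T ^ 2 := by
        have h4 : 0 ≤ α * D * (T - (c + D)) :=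
          mul_nonneg (mul_nonneg hα0.le hD0) hTcd
        rw [hc] at key
        nlinarith [key, h4, hD0]
      have h5 : (x (k + 1)) ^ 2 ≤ T ^ 2 := le_trans (hrec k) (by linarith)
      calc x (k + 1) = Real.sqrt ((x (k+1))^2) := (Real.sqrt_sq (hx _)).symm
        _ ≤ Real.sqrt (T ^ 2) := Real.sqrt_le_sqrt h5
        _ = T := Real.sqrt_sq hT0
  -- D ≤ √(A/α)
  have hDsq : D ≤ Real.sqrt (A / α) := by
    rcases eq_or_lt_of_le hA with hA0 | hA0
    · simp [hD_def, ← hA0, Real.sqrt_nonneg]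
    · have hprod : 0 < α * (2 - α) * A := mul_pos (mul_pos hα0 (by linarith)) hA0
      have hspos : 0 < s := Real.sqrt_pos.mpr hprod
      have h1 : D ≤ A / s := by
        rw [hD_def]
        gcongr
        linarith
      have h2 : (A / s) ^ 2 ≤ A / α := by
        rw [div_pow, hs2]
        rw [div_le_div_iff₀ hprod hα0]
        nlinarith [mul_nonneg (mul_nonneg hα0.le (by linarith : (0:ℝ) ≤ 1 - α)) (sq_nonneg A)]
      have h3 : A / s ≤ Real.sqrt (A / α) := by
        calc A / s = Real.sqrt ((A / s) ^ 2) :=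
              (Real.sqrt_sq (div_nonneg hA hspos.le)).symm
          _ ≤ Real.sqrt (A / α) := Real.sqrt_le_sqrt h2
      linarith
  intro k
  exact ⟨main k, (main k).trans (by linarith)⟩
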